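/- If m ∈ ℕ has a diverging Collatz trajectory (the sequence T^k(m) takes each value at most finitely often, equivalently T^k(m) → ∞), then the formal power series f_m(1,z) + Σ_{k≥1} z^{T^k(m)}, where f_m(1,z) = Σ_{p≥0} z^{2^p m}, is a fixed point of 𝒯 (as a formal power series, each coefficient being well-defined). -/

import Mathlib

/-- The reduced Collatz map. -/
def collatzT (n : ℕ) : ℕ := if n % 2 = 1 then (3 * n + 1) / 2 else n / 2

/-- The operator `𝒯` on formal power series (as coefficient sequences),
determined by `𝒯(z^n) = z^{T(n)}`. -/
def opT (a : ℕ → ℂ) : ℕ → ℂ :=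
  fun m => a (2 * m) + (if m % 3 = 2 then a ((2 * m - 1) / 3) else 0)

/-- The coefficient sequence of `f_m(1, z) = Σ_{p≥0} z^{m·2^p}`. -/
noncomputable def fSeriesOne (m : ℕ) : ℕ → ℂ :=
  fun j => ∑' p : ℕ, if j = m * 2 ^ p then (1 : ℂ) else 0

lemma collatzT_eq_iff (n j : ℕ) :
    collatzT n = j ↔ (n = 2 * j ∨ (j % 3 = 2 ∧ n = (2 * j - 1) / 3)) := by
  unfold collatzT; split <;> omega

lemma ite_split {P Q R : Prop} [Decidable P] [Decidable Q] [Decidable R]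
    (h : P ↔ Q ∨ R) (hd : ¬(Q ∧ R)) :
    (if P then (1 : ℂ) else 0) = (if Q then 1 else 0) + (if R then 1 else 0) := by
  by_cases hQ : Q <;> by_cases hR : R
  · exact absurd ⟨hQ, hR⟩ hd
  all_goals simp [h, hQ, hR]

lemma summable_ind {m : ℕ} (hm : 1 ≤ m) (x : ℕ) :
    Summable (fun p : ℕ => if x = m * 2 ^ p then (1 : ℂ) else 0) := by
  apply summable_of_ne_finset_zero (s := Finset.range (x + 1))
  intro p hp
  simp only [Finset.mem_range, not_lt] at hp
  have h1 : p < 2 ^ p := Nat.lt_two_pow_self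
  have h2 : 1 * 2 ^ p ≤ m * 2 ^ p := Nat.mul_le_mul_right _ hm
  rw [if_neg]
  omega

lemma summable_traj (m : ℕ)
    (hdiv : Filter.Tendsto (fun k => collatzT^[k] m) Filter.atTop Filter.atTop)
    (x : ℕ) :
    Summable (fun k : ℕ => if x = collatzT^[k + 1] m then (1 : ℂ) else 0) := by
  have h := hdiv.eventually (Filter.eventually_gt_atTop x)
  obtain ⟨N, hN⟩ := Filter.eventually_atTop.mp h
  apply summable_of_ne_finset_zero (s := Finset.range N)
  intro k hk
  simp only [Finset.mem_range, not_lt] at hk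
  have := hN (k + 1) (by omega)
  rw [if_neg]
  omega

lemma fSeriesOne_two_mul (m j : ℕ) (hm : 1 ≤ m) :
    fSeriesOne m (2 * j) = (if m = 2 * j then 1 else 0) + fSeriesOne m j := by
  unfold fSeriesOne
  rw [Summable.tsum_eq_zero_add (summable_ind hm (2 * j))]
  congr 1
  · simp only [pow_zero, mul_one]
    exact if_congr eq_comm rfl rfl
  · refine tsum_congr fun p => ?_
    have h : m * 2 ^ (p + 1) = 2 * (m * 2 ^ p) := by ring
    rw [h]
    exact if_congr (by omega) rfl rfl

lemma fSeriesOne_odd (m n : ℕ) (hn : n % 2 = 1) :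
    fSeriesOne m n = if m = n then 1 else 0 := by
  unfold fSeriesOne
  rw [tsum_eq_single 0 ?_]
  · simp only [pow_zero, mul_one]
    exact if_congr eq_comm rfl rfl
  · intro p hp
    have h2 : (2 : ℕ) ∣ 2 ^ p := dvd_pow_self 2 hp
    have h3 : (2 : ℕ) ∣ m * 2 ^ p := h2.mul_left m
    rw [if_neg]
    omega

lemma traj_shift (m : ℕ)
    (hdiv : Filter.Tendsto (fun k => collatzT^[k] m) Filter.atTop Filter.atTop)
    (j : ℕ) :
    (∑' k : ℕ, if j = collatzT^[k + 1] m then (1 : ℂ) else 0)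
      = (if j = collatzT m then 1 else 0)
        + ∑' k : ℕ, if j = collatzT^[k + 2] m then (1 : ℂ) else 0 := by
  rw [Summable.tsum_eq_zero_add (summable_traj m hdiv j)]
  rfl

/-- if the Collatz trajectory of `m` diverges (`T^k(m) → ∞`), then
`f_m(1,z) + Σ_{k≥1} z^{T^k(m)}` is a fixed point of `𝒯`. -/
theorem diverging_trajectory_fixed_point (m : ℕ) (hm : 1 ≤ m)
    (hdiv : Filter.Tendsto (fun k => collatzT^[k] m) Filter.atTop Filter.atTop) :
    opT (fun j => fSeriesOne m j +
        ∑' k : ℕ, if j = collatzT^[k + 1] m then (1 : ℂ) else 0) =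
      (fun j => fSeriesOne m j +
        ∑' k : ℕ, if j = collatzT^[k + 1] m then (1 : ℂ) else 0) := by
  funext j
  have hsum := summable_traj m hdiv
  simp only [opT]
  rw [traj_shift m hdiv j]
  by_cases hc : j % 3 = 2
  · rw [if_pos hc]
    have hodd : (2 * j - 1) / 3 % 2 = 1 := by omega
    rw [fSeriesOne_two_mul m j hm, fSeriesOne_odd m _ hodd]
    have htail : (∑' k : ℕ, if j = collatzT^[k + 2] m then (1 : ℂ) else 0)
        = (∑' k : ℕ, if 2 * j = collatzT^[k + 1] m then (1 : ℂ) else 0)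
          + ∑' k : ℕ, if (2 * j - 1) / 3 = collatzT^[k + 1] m then (1 : ℂ) else 0 := by
      rw [← Summable.tsum_add (hsum (2 * j)) (hsum ((2 * j - 1) / 3))]
      refine tsum_congr fun k => ?_
      rw [Function.iterate_succ_apply' collatzT (k + 1)]
      exact ite_split (by rw [eq_comm, collatzT_eq_iff]; omega) (by omega)
    rw [htail]
    have hhead : (if j = collatzT m then (1 : ℂ) else 0)
        = (if m = 2 * j then 1 else 0) + (if m = (2 * j - 1) / 3 then 1 else 0) :=
      ite_split (by rw [eq_comm, collatzT_eq_iff]; omega) (by omega)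
    rw [hhead]
    ring
  · rw [if_neg hc]
    rw [fSeriesOne_two_mul m j hm]
    have htail : (∑' k : ℕ, if j = collatzT^[k + 2] m then (1 : ℂ) else 0)
        = ∑' k : ℕ, if 2 * j = collatzT^[k + 1] m then (1 : ℂ) else 0 := by
      refine tsum_congr fun k => ?_
      rw [Function.iterate_succ_apply' collatzT (k + 1)]
      exact if_congr (by rw [eq_comm, collatzT_eq_iff]; omega) rfl rfl
    rw [htail]
    have hhead : (if j = collatzT m then (1 : ℂ) else 0) = (if m = 2 * j then 1 else 0) :=
      if_congr (by rw [eq_comm, collatzT_eq_iff]; omega) rfl rfl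
    rw [hhead]
    ring
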